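/- If G is a block graph that is tagged (has a maximal complete subgraph K_r, r ≥ 3, containing two vertices u, v with deg(u) = deg(v) = r − 1), then there exist two distinct vertices u, v such that the set of vertices distinguishing u and v is exactly {u, v}; in particular Dim(G) = 2. -/

import Mathlib

/-- Set of vertices distinguishing `u` and `v`. -/
noncomputable def distinguishers {V : Type*} (G : SimpleGraph V) (u v : V) : Set V :=
  {w | G.dist u w ≠ G.dist v w}

/-- `Dim(G)`: the largest `k` such that every pair of distinct vertices is
distinguished by at least `k` vertices. -/
noncomputable def metricDim {V : Type*} (G : SimpleGraph V) : ℕ :=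
  sSup {k | ∀ u v : V, u ≠ v → k ≤ (distinguishers G u v).ncard}

/-- The boundary `∂N(v,m)`: vertices at distance `m` from `v` having a
neighbor outside `N(v,m)`. -/
def bdry {V : Type*} (G : SimpleGraph V) (v : V) (m : ℕ) : Set V :=
  {w | G.dist v w = m ∧ ∃ x, G.Adj w x ∧ m < G.dist v x}

/-- `v` and `v'` are distinct and have equal (nonempty) `m`-boundary. -/
def eqBdry {V : Type*} (G : SimpleGraph V) (v v' : V) (m : ℕ) : Prop :=
  v ≠ v' ∧ bdry G v m = bdry G v' m ∧ (bdry G v m).Nonempty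

noncomputable def etaM {V : Type*} (G : SimpleGraph V) (v v' : V) (m : ℕ) : ℕ :=
  {w | (G.dist v w ≤ m ∨ G.dist v' w ≤ m) ∧ G.dist v w ≠ G.dist v' w}.ncard

noncomputable def etaG {V : Type*} (G : SimpleGraph V) : ℕ :=
  sInf {n | ∃ (m : ℕ) (v v' : V), eqBdry G v v' m ∧ n = etaM G v v' m}

/-- the diameter of `G`. -/
noncomputable def gdiam {V : Type*} (G : SimpleGraph V) : ℕ :=
  sSup {n | ∃ u v : V, G.dist u v = n}

/-- Reachability in `G` avoiding the vertex set `S`. -/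
def ReachOff {V : Type*} (G : SimpleGraph V) (S : Set V) (a b : V) : Prop :=
  ∃ p : G.Walk a b, ∀ x ∈ p.support, x ∉ S

/-- `S` is a common separating subset of the `m`-spheres of `v` and `v'`. -/
def CommonSepSubset {V : Type*} (G : SimpleGraph V) (v v' : V) (m : ℕ) (S : Set V) : Prop :=
  S ⊆ {w | G.dist v w = m} ∩ {w | G.dist v' w = m} ∧
  (∃ a b : V, a ∉ S ∧ b ∉ S ∧ ¬ ReachOff G S a b) ∧
  (∃ w : V, w ∉ S ∧ ¬ ReachOff G S w v ∧ ¬ ReachOff G S w v')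

/-- `(v,v') ∈ 𝒫ₘ(G)`. -/
def memPm {V : Type*} (G : SimpleGraph V) (v v' : V) (m : ℕ) : Prop :=
  v ≠ v' ∧ ∃ S : Set V, CommonSepSubset G v v' m S

/-- `Sₘ(v,v')`: the union of all common separating subsets of the `m`-spheres. -/
def SmUnion {V : Type*} (G : SimpleGraph V) (v v' : V) (m : ℕ) : Set V :=
  {x | ∃ S : Set V, CommonSepSubset G v v' m S ∧ x ∈ S}

/-- The union of the components of `G \ Sₘ(v,v')` containing neither `v` nor `v'`. -/
def avoidComps {V : Type*} (G : SimpleGraph V) (v v' : V) (m : ℕ) : Set V :=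
  {w | w ∉ SmUnion G v v' m ∧ ¬ ReachOff G (SmUnion G v v' m) w v ∧
    ¬ ReachOff G (SmUnion G v v' m) w v'}

noncomputable def muM {V : Type*} (G : SimpleGraph V) (v v' : V) (m : ℕ) : ℕ :=
  {w | w ∉ avoidComps G v v' m ∧ G.dist v w ≠ G.dist v' w}.ncard

noncomputable def muG {V : Type*} (G : SimpleGraph V) : ℕ :=
  sInf {n | ∃ (m : ℕ) (v v' : V), memPm G v v' m ∧ n = muM G v v' m}

/-- degree as the cardinality of the neighbor set. -/
noncomputable def ndeg {V : Type*} (G : SimpleGraph V) (v : V) : ℕ := (G.neighborSet v).ncard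

def IsMajor {V : Type*} (G : SimpleGraph V) (v : V) : Prop := 3 ≤ ndeg G v

/-- `u` is a terminal vertex of the major vertex `w`. -/
def IsTerminalOf {V : Type*} (G : SimpleGraph V) (u w : V) : Prop :=
  ndeg G u = 1 ∧ IsMajor G w ∧
    ∀ w', IsMajor G w' → w' ≠ w → G.dist u w < G.dist u w'

/-- `G` is a V-graph. -/
def IsVGraph {V : Type*} (G : SimpleGraph V) : Prop :=
  ∃ w, IsMajor G w ∧ {u | IsTerminalOf G u w}.ncard = 2 ∧
    ∀ u, IsTerminalOf G u w → G.Adj u w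

/-- `G` is a block graph: connected and every biconnected (2-connected)
set of vertices induces a clique. -/
def IsBlockGraph {V : Type*} (G : SimpleGraph V) : Prop :=
  G.Connected ∧ ∀ B : Set V, 3 ≤ B.ncard → (G.induce B).Connected →
    (∀ x ∈ B, (G.induce (B \ {x})).Connected) → G.IsClique B

/-- `G` is tagged. -/
def Tagged {V : Type*} (G : SimpleGraph V) : Prop :=
  ∃ K : Set V, G.IsClique K ∧ (∀ K' : Set V, K ⊆ K' → G.IsClique K' → K' = K) ∧
    3 ≤ K.ncard ∧ ∃ u ∈ K, ∃ v ∈ K, u ≠ v ∧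
      ndeg G u = K.ncard - 1 ∧ ndeg G v = K.ncard - 1

/-- `G` is neither a complete graph nor a path graph. -/
def NonElementary {V : Type*} (G : SimpleGraph V) : Prop :=
  G ≠ ⊤ ∧ ∀ n : ℕ, IsEmpty (G ≃g SimpleGraph.pathGraph n)

lemma twin_dist_le {V : Type*} (G : SimpleGraph V) (hc : G.Connected)
    (a b : V) (hab : G.Adj a b)
    (htwin : ∀ w, w ≠ a → w ≠ b → (G.Adj a w ↔ G.Adj b w))
    (w : V) (hwa : w ≠ a) (hwb : w ≠ b) : G.dist b w ≤ G.dist a w := by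
  obtain ⟨p, hp⟩ := hc.exists_walk_length_eq_dist a w
  cases p with
  | nil => exact absurd rfl hwa.symm
  | @cons _ x _ h q =>
    simp only [SimpleGraph.Walk.length_cons] at hp
    by_cases hxb : x = b
    · subst hxb
      calc G.dist x w ≤ q.length := SimpleGraph.dist_le q
        _ ≤ q.length + 1 := Nat.le_succ _
        _ = G.dist a w := hp
    · have hxa : x ≠ a := fun he => G.irrefl (he ▸ h)
      have hbx : G.Adj b x := (htwin x hxa hxb).mp h
      calc G.dist b w ≤ G.dist b x + G.dist x w := hc.dist_triangle
        _ ≤ 1 + q.length := Nat.add_le_add (SimpleGraph.dist_le hbx.toWalk) (SimpleGraph.dist_le q)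
        _ = G.dist a w := by omega

lemma nbhd_eq_of_tagged {V : Type*} [Fintype V] (G : SimpleGraph V) (K : Set V)
    (hKcl : G.IsClique K) (u : V) (hu : u ∈ K) (hdu : ndeg G u = K.ncard - 1) :
    G.neighborSet u = K \ {u} := by
  refine (Set.eq_of_subset_of_ncard_le (fun x hx => ?_) ?_ (Set.toFinite _)).symm
  · exact (hKcl hx.1 hu hx.2).symm
  · rw [Set.ncard_diff_singleton_of_mem hu]
    exact le_of_eq hdu

theorem stmt13 {V : Type*} [Fintype V] (G : SimpleGraph V)
    (hG : IsBlockGraph G) (ht : Tagged G) :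
    (∃ u v : V, u ≠ v ∧ distinguishers G u v = {u, v}) ∧ metricDim G = 2 := by
  obtain ⟨hc, -⟩ := hG
  obtain ⟨K, hKcl, -, -, u, hu, v, hv, huv, hdu, hdv⟩ := ht
  have hNu := nbhd_eq_of_tagged G K hKcl u hu hdu
  have hNv := nbhd_eq_of_tagged G K hKcl v hv hdv
  have hadj : G.Adj u v := hKcl hu hv huv
  have htwin : ∀ w, w ≠ u → w ≠ v → (G.Adj u w ↔ G.Adj v w) := by
    intro w hwu hwv
    have h1 : G.Adj u w ↔ w ∈ K := by
      rw [← SimpleGraph.mem_neighborSet, hNu]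
      simp [hwu]
    have h2 : G.Adj v w ↔ w ∈ K := by
      rw [← SimpleGraph.mem_neighborSet, hNv]
      simp [hwv]
    rw [h1, h2]
  have htwin' : ∀ w, w ≠ v → w ≠ u → (G.Adj v w ↔ G.Adj u w) := by
    intro w h1 h2; exact (htwin w h2 h1).symm
  have hdeq : ∀ w, w ≠ u → w ≠ v → G.dist u w = G.dist v w := by
    intro w hwu hwv
    exact le_antisymm (twin_dist_le G hc v u hadj.symm htwin' w hwv hwu)
      (twin_dist_le G hc u v hadj htwin w hwu hwv)
  have hkey : distinguishers G u v = {u, v} := by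
    ext w
    simp only [distinguishers, Set.mem_setOf_eq, Set.mem_insert_iff, Set.mem_singleton_iff]
    constructor
    · intro h
      by_contra hcon
      push_neg at hcon
      exact h (hdeq w hcon.1 hcon.2)
    · rintro (rfl | rfl)
      · simp only [SimpleGraph.dist_self]
        exact fun h => huv.symm (hc.dist_eq_zero_iff.mp h.symm)
      · simp only [SimpleGraph.dist_self]
        exact fun h => huv (hc.dist_eq_zero_iff.mp h)
  have hpairmem : ∀ a b : V, a ≠ b → ({a, b} : Set V) ⊆ distinguishers G a b := by
    intro a b hab w hw
    rcases hw with rfl | rfl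
    · simp only [distinguishers, Set.mem_setOf_eq, SimpleGraph.dist_self]
      exact fun h => hab (hc.dist_eq_zero_iff.mp h.symm).symm
    · simp only [distinguishers, Set.mem_setOf_eq, SimpleGraph.dist_self]
      exact fun h => hab (hc.dist_eq_zero_iff.mp h)
  have h2mem : 2 ∈ {k | ∀ a b : V, a ≠ b → k ≤ (distinguishers G a b).ncard} := by
    intro a b hab
    calc 2 = ({a, b} : Set V).ncard := (Set.ncard_pair hab).symm
      _ ≤ (distinguishers G a b).ncard :=
        Set.ncard_le_ncard (hpairmem a b hab) (Set.toFinite _)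
  have hub : ∀ k ∈ {k | ∀ a b : V, a ≠ b → k ≤ (distinguishers G a b).ncard}, k ≤ 2 := by
    intro k hk
    have := hk u v huv
    rwa [hkey, Set.ncard_pair huv] at this
  refine ⟨⟨u, v, huv, hkey⟩, ?_⟩
  exact le_antisymm (csSup_le ⟨2, h2mem⟩ hub) (le_csSup ⟨2, hub⟩ h2mem)
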